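/- Suppose λ^{<θ} < λ^θ with θ an infinite regular cardinal. Then there exist families 𝒳 and 𝒴 of sets of ordinals such that: |𝒳| = λ^θ; (𝒴, ⊆) has order type θ; for all distinct x, x′ ∈ 𝒳 there is y ∈ 𝒴 with x ∩ x′ ⊆ y; for every (x,y) ∈ 𝒳 × 𝒴, x \ y ≠ ∅; and for every y ∈ 𝒴, the set {min(x \ y) : x ∈ 𝒳} has size at most λ^{<θ}. -/

import Mathlib

open Cardinal Ordinal Set

namespace Stmt16Aux

noncomputable instance (o : Ordinal.{0}) : IsWellOrder o.ToType (· < ·) := isWellOrder_lt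

noncomputable section

variable (θ lam : Cardinal.{0})

/-- The index type: a type of order type `θ.ord`. -/
abbrev K : Type := θ.ord.ToType

/-- A type of cardinality `lam`. -/
abbrev L : Type := Quotient.out lam

/-- The tree of partial functions (levels indexed by `K θ`). -/
abbrev T : Type := Σ i : K θ, ({j : K θ // j < i} → L lam)

/-- An injection of the tree into the ordinals. -/
def e : T θ lam ↪ Ordinal.{0} :=
  embeddingToCardinal.trans ⟨Cardinal.ord, Cardinal.ord_injective⟩

/-- Restriction of a branch to a level. -/
def res (f : K θ → L lam) (i : K θ) : {j : K θ // j < i} → L lam := fun j => f j.1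

/-- The set of ordinals coding the restrictions of a branch `f`. -/
def xf (f : K θ → L lam) : Set Ordinal.{0} :=
  Set.range fun i : K θ => e θ lam ⟨i, res θ lam f i⟩

/-- The set of ordinals coding nodes of level `< τ`. -/
def Yf (τ : Ordinal.{0}) : Set Ordinal.{0} :=
  e θ lam '' {t : T θ lam | typein (α := K θ) (· < ·) t.1 < τ}

end

end Stmt16Aux

open Stmt16Aux

theorem stmt_16 (θ lam : Cardinal.{0}) (hθ : ℵ₀ ≤ θ) (hθreg : θ.IsRegular)
    (hpow : lam ^< θ < lam ^ θ) :
    ∃ (𝒳 : Set (Set Ordinal.{0})) (Y : Ordinal.{0} → Set Ordinal.{0}),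
      Cardinal.mk ↥𝒳 = Cardinal.lift.{1,0} (lam ^ θ) ∧
      (∀ σ τ : Ordinal, σ < τ → τ < θ.ord → Y σ ⊂ Y τ) ∧
      (∀ x ∈ 𝒳, ∀ x' ∈ 𝒳, x ≠ x' → ∃ τ < θ.ord, x ∩ x' ⊆ Y τ) ∧
      (∀ x ∈ 𝒳, ∀ τ < θ.ord, (x \ Y τ).Nonempty) ∧
      (∀ τ < θ.ord,
        Cardinal.mk ↥{o : Ordinal | ∃ x ∈ 𝒳, o = sInf (x \ Y τ)} ≤
          Cardinal.lift.{1,0} (lam ^< θ)) := by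
  classical
  have hθ0 : (0 : Cardinal) < θ := aleph0_pos.trans_le hθ
  have κlim : Order.IsSuccLimit θ.ord := Cardinal.isSuccLimit_ord hθ
  -- λ is at least 2
  have hlam1 : (1 : Cardinal) < lam := by
    by_contra h
    push_neg at h
    have h1 : lam ^ θ ≤ 1 := by
      calc lam ^ θ ≤ 1 ^ θ := power_le_power_right h
        _ = 1 := one_power
    have h2 : (1 : Cardinal) ≤ lam ^< θ := by
      have := le_powerlt lam hθ0
      rwa [power_zero] at this
    exact absurd (h2.trans_lt (hpow.trans_le h1)) (lt_irrefl _)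
  have hlam2 : (2 : Cardinal) ≤ lam := by
    have h2 : (2 : Cardinal) = Order.succ (1 : Cardinal) := by
      have h := Cardinal.nat_succ 1
      norm_num at h
      exact h
    rw [h2]
    exact Order.succ_le_of_lt hlam1
  have hlamL : Nonempty (L lam) := by
    rw [← mk_ne_zero_iff, mk_out]
    exact fun h => by simp [h] at hlam1
  -- θ ≤ λ ^< θ
  have hθle : θ ≤ lam ^< θ := by
    by_contra h
    push_neg at h
    have := (cantor (lam ^< θ)).trans_le
      ((power_le_power_right hlam2).trans (le_powerlt lam h))
    exact absurd this (lt_irrefl _)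
  have e_inj : Function.Injective (e θ lam) := (e θ lam).injective
  -- key: injectivity consequences of node equalities
  have node_eq : ∀ {f g : K θ → L lam} {i i' : K θ},
      e θ lam ⟨i, res θ lam f i⟩ = e θ lam ⟨i', res θ lam g i'⟩ →
      i = i' ∧ ∀ (j : K θ) (hj : j < i), f j = g j := by
    intro f g i i' h
    have h' := e_inj h
    obtain ⟨h1, h2⟩ := Sigma.mk.inj_iff.mp h'
    subst h1
    refine ⟨rfl, fun j hj => ?_⟩
    have := congrFun (eq_of_heq h2) ⟨j, hj⟩
    exact this
  -- every element of K has a strict upper bound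
  have exists_gt : ∀ j : K θ, ∃ i : K θ, j < i := by
    intro j
    have h1 : Order.succ (typein (α := K θ) (· < ·) j) < type (α := K θ) (· < ·) := by
      rw [type_toType]
      exact κlim.succ_lt (typein_lt_self j)
    refine ⟨enum (α := K θ) (· < ·) ⟨Order.succ (typein (α := K θ) (· < ·) j), h1⟩, ?_⟩
    rw [← typein_lt_typein (α := K θ) (· < ·), typein_enum]
    exact Order.lt_succ _
  -- xf is injective
  have hxf_inj : Function.Injective (xf θ lam) := by
    intro f g h
    funext j
    obtain ⟨i, hji⟩ := exists_gt j
    have hmem : e θ lam ⟨i, res θ lam f i⟩ ∈ xf θ lam g := by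
      rw [← h]; exact ⟨i, rfl⟩
    obtain ⟨i', hi'⟩ := hmem
    obtain ⟨h1, h2⟩ := node_eq hi'.symm
    exact h2 j hji
  refine ⟨Set.range (xf θ lam), Yf θ lam, ?_, ?_, ?_, ?_, ?_⟩
  · -- cardinality of 𝒳
    have h1 := mk_range_eq_of_injective hxf_inj
    rw [Cardinal.lift_uzero] at h1
    rw [h1, ← power_def, mk_toType, card_ord, mk_out]
  · -- Y is strictly increasing
    intro σ τ hστ hτ
    constructor
    · refine Set.image_mono ?_
      intro t ht
      simp only [Set.mem_setOf_eq] at ht ⊢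
      exact ht.trans hστ
    · intro hsub
      have hσ : σ < type (α := K θ) (· < ·) := by rw [type_toType]; exact hστ.trans hτ
      set i : K θ := enum (α := K θ) (· < ·) ⟨σ, hσ⟩ with hi
      have hti : typein (α := K θ) (· < ·) i = σ := typein_enum _ _
      set t : T θ lam := ⟨i, fun _ => Classical.arbitrary (L lam)⟩ with ht
      have hmem : e θ lam t ∈ Yf θ lam τ := ⟨t, by simp [ht, hti, hστ], rfl⟩
      obtain ⟨t', ht', het'⟩ := hsub hmem
      have : t' = t := e_inj het'
      rw [this] at ht'
      simp only [Set.mem_setOf_eq, ht, hti] at ht'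
      exact absurd ht' (lt_irrefl σ)
  · -- intersections are covered
    rintro x ⟨f, rfl⟩ x' ⟨g, rfl⟩ hne
    have hfg : f ≠ g := fun h => hne (by rw [h])
    obtain ⟨i₀, hi₀⟩ := Function.ne_iff.mp hfg
    refine ⟨Order.succ (typein (α := K θ) (· < ·) i₀),
      κlim.succ_lt (typein_lt_self i₀), ?_⟩
    rintro o ⟨⟨i, rfl⟩, ⟨i', hi'⟩⟩
    obtain ⟨h1, h2⟩ := node_eq hi'.symm
    subst h1
    have hle : ¬ i₀ < i := fun hlt => hi₀ (h2 i₀ hlt)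
    refine ⟨⟨i, res θ lam f i⟩, ?_, rfl⟩
    simp only [Set.mem_setOf_eq]
    calc typein (α := K θ) (· < ·) i ≤ typein (α := K θ) (· < ·) i₀ :=
          (typein_le_typein _).mpr hle
      _ < _ := Order.lt_succ _
  · -- x \ Y τ is nonempty
    rintro x ⟨f, rfl⟩ τ hτ
    have hτ' : τ < type (α := K θ) (· < ·) := by rw [type_toType]; exact hτ
    set i : K θ := enum (α := K θ) (· < ·) ⟨τ, hτ'⟩ with hi
    have hti : typein (α := K θ) (· < ·) i = τ := typein_enum _ _
    refine ⟨e θ lam ⟨i, res θ lam f i⟩, ⟨i, rfl⟩, ?_⟩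
    rintro ⟨t', ht', het'⟩
    have : t' = ⟨i, res θ lam f i⟩ := e_inj het'
    rw [this] at ht'
    simp only [Set.mem_setOf_eq, hti] at ht'
    exact absurd ht' (lt_irrefl τ)
  · -- the minima come from a small set
    intro τ hτ
    -- cardinality of the tree
    have hT : #(T θ lam) ≤ lam ^< θ := by
      rw [mk_sigma]
      calc (sum fun i : K θ => #({j : K θ // j < i} → L lam))
          ≤ sum fun _ : K θ => lam ^< θ := by
            refine sum_le_sum _ _ fun i => ?_
            have h1 : #({j : K θ // j < i} → L lam) = lam ^ (typein (α := K θ) (· < ·) i).card := by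
              rw [← power_def, mk_out, card_typein]
            rw [h1]
            exact le_powerlt lam (Cardinal.lt_ord.mp (typein_lt_self i))
        _ = #(K θ) * (lam ^< θ) := sum_const' _ _
        _ = θ * (lam ^< θ) := by rw [mk_toType, card_ord]
        _ ≤ (lam ^< θ) * (lam ^< θ) := mul_le_mul_left hθle _
        _ = lam ^< θ := mul_eq_self (hθ.trans hθle)
    -- the set of minima is included in the range of e
    have hsub : {o : Ordinal | ∃ x ∈ Set.range (xf θ lam), o = sInf (x \ Yf θ lam τ)} ⊆
        Set.range (e θ lam) := by
      rintro o ⟨x, ⟨f, rfl⟩, rfl⟩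
      have hne : (xf θ lam f \ Yf θ lam τ).Nonempty := by
        have hτ' : τ < type (α := K θ) (· < ·) := by rw [type_toType]; exact hτ
        set i : K θ := enum (α := K θ) (· < ·) ⟨τ, hτ'⟩ with hi
        have hti : typein (α := K θ) (· < ·) i = τ := typein_enum _ _
        refine ⟨e θ lam ⟨i, res θ lam f i⟩, ⟨i, rfl⟩, ?_⟩
        rintro ⟨t', ht', het'⟩
        have : t' = ⟨i, res θ lam f i⟩ := e_inj het'
        rw [this] at ht'
        simp only [Set.mem_setOf_eq, hti] at ht'
        exact absurd ht' (lt_irrefl τ)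
      have hmem : sInf (xf θ lam f \ Yf θ lam τ) ∈ xf θ lam f \ Yf θ lam τ :=
        csInf_mem hne
      obtain ⟨i, hi⟩ := hmem.1
      exact ⟨⟨i, res θ lam f i⟩, hi⟩
    calc #{o : Ordinal | ∃ x ∈ Set.range (xf θ lam), o = sInf (x \ Yf θ lam τ)}
        ≤ #(Set.range (e θ lam)) := mk_le_mk_of_subset hsub
      _ = lift.{1} #(T θ lam) := by
          have := mk_range_eq_of_injective e_inj
          rwa [Cardinal.lift_uzero] at this
      _ ≤ lift.{1} (lam ^< θ) := lift_le.mpr hT
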